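/- Along any solution c of the Kepler-Heisenberg system, the angular momentum p_θ = x·p_y − y·p_x is conserved: the function t ↦ p_θ(c(t)) is constant on the interval of definition. -/

import Mathlib

/-- `P_X = p_x - (1/2) y p_z`, where phase space coordinates are
`(x, y, z, p_x, p_y, p_z) = (p 0, p 1, p 2, p 3, p 4, p 5)`. -/
noncomputable def PX (p : Fin 6 → ℝ) : ℝ := p 3 - (1/2) * p 1 * p 5

/-- `P_Y = p_y + (1/2) x p_z`. -/
noncomputable def PY (p : Fin 6 → ℝ) : ℝ := p 4 + (1/2) * p 0 * p 5

/-- `Q = (x² + y²)² + 16 z²`. -/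
noncomputable def Qf (p : Fin 6 → ℝ) : ℝ := ((p 0)^2 + (p 1)^2)^2 + 16 * (p 2)^2

/-- The Kepler–Heisenberg Hamiltonian `H = (1/2)(P_X² + P_Y²) - (1/(8π)) Q^{-1/2}`. -/
noncomputable def Ham (p : Fin 6 → ℝ) : ℝ :=
  (1/2) * ((PX p)^2 + (PY p)^2) - (1/(8*Real.pi)) * (Qf p) ^ (-(1/2) : ℝ)

/-- A solution of the Kepler–Heisenberg system: a differentiable curve on an open
interval (open preconnected set) `I`, whose position component never vanishes, and
which satisfies Hamilton's equations for `Ham`. -/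
def IsSolutionOn (c : ℝ → Fin 6 → ℝ) (I : Set ℝ) : Prop :=
  IsOpen I ∧ IsPreconnected I ∧
  ∀ t ∈ I,
    (¬ (c t 0 = 0 ∧ c t 1 = 0 ∧ c t 2 = 0)) ∧
    HasDerivAt (fun τ => c τ 0) (fderiv ℝ Ham (c t) (Pi.single 3 1)) t ∧
    HasDerivAt (fun τ => c τ 1) (fderiv ℝ Ham (c t) (Pi.single 4 1)) t ∧
    HasDerivAt (fun τ => c τ 2) (fderiv ℝ Ham (c t) (Pi.single 5 1)) t ∧
    HasDerivAt (fun τ => c τ 3) (-(fderiv ℝ Ham (c t) (Pi.single 0 1))) t ∧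
    HasDerivAt (fun τ => c τ 4) (-(fderiv ℝ Ham (c t) (Pi.single 1 1))) t ∧
    HasDerivAt (fun τ => c τ 5) (-(fderiv ℝ Ham (c t) (Pi.single 2 1))) t

/-- The angular momentum `p_θ = x p_y - y p_x`. -/
noncomputable def ptheta (p : Fin 6 → ℝ) : ℝ := p 0 * p 4 - p 1 * p 3

lemma Qf_ne_zero {q : Fin 6 → ℝ} (h : ¬ (q 0 = 0 ∧ q 1 = 0 ∧ q 2 = 0)) : Qf q ≠ 0 := by
  unfold Qf
  intro h0
  apply h
  have h1 : ((q 0)^2 + (q 1)^2)^2 = 0 ∧ (q 2)^2 = 0 := by constructor <;> nlinarith [sq_nonneg ((q 0)^2 + (q 1)^2), sq_nonneg (q 2), sq_nonneg (q 0), sq_nonneg (q 1)]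
  have h2 : (q 0)^2 + (q 1)^2 = 0 := by
    have := pow_eq_zero_iff (n := 2) (by norm_num) |>.mp h1.1
    exact this
  refine ⟨?_, ?_, ?_⟩
  · nlinarith [sq_nonneg (q 0), sq_nonneg (q 1)]
  · nlinarith [sq_nonneg (q 0), sq_nonneg (q 1)]
  · exact pow_eq_zero_iff (n := 2) (by norm_num) |>.mp h1.2

lemma fderiv_ham_apply (q : Fin 6 → ℝ) (hq : Qf q ≠ 0) (v : Fin 6 → ℝ) :
    fderiv ℝ Ham q v =
      PX q * (v 3 - (1/2) * (v 1 * q 5 + q 1 * v 5))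
      + PY q * (v 4 + (1/2) * (v 0 * q 5 + q 0 * v 5))
      + (1/(16*Real.pi)) * (Qf q) ^ (-(1/2) - 1 : ℝ)
        * (2 * ((q 0)^2 + (q 1)^2) * (2 * q 0 * v 0 + 2 * q 1 * v 1) + 32 * q 2 * v 2) := by
  have h0 := fun i : Fin 6 => hasFDerivAt_apply (𝕜 := ℝ) i q
  have hPX := (h0 3).sub (((h0 1).const_mul (𝕜 := ℝ) (1/2 : ℝ)).mul (h0 5))
  have hPY := (h0 4).add (((h0 0).const_mul (𝕜 := ℝ) (1/2 : ℝ)).mul (h0 5))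
  have hr2 := ((h0 0).mul (h0 0)).add ((h0 1).mul (h0 1))
  have hQ := (hr2.mul hr2).add (((h0 2).mul (h0 2)).const_mul (𝕜 := ℝ) (16 : ℝ))
  have hq' : (fun p : Fin 6 → ℝ =>
      (p 0 * p 0 + p 1 * p 1) * (p 0 * p 0 + p 1 * p 1) + 16 * (p 2 * p 2)) q ≠ 0 := by
    simpa [Qf, pow_two] using hq
  have hR := (hQ.rpow_const (p := (-(1/2) : ℝ)) (Or.inl hq')).const_mul (𝕜 := ℝ) (1/(8*Real.pi) : ℝ)
  have hK := ((hPX.mul hPX).add (hPY.mul hPY)).const_mul (𝕜 := ℝ) (1/2 : ℝ)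
  have hH := HasFDerivAt.sub (𝕜 := ℝ) hK hR
  have hfun : (fun y : Fin 6 → ℝ =>
      1 / 2 * ((y 3 - 1 / 2 * y 1 * y 5) * (y 3 - 1 / 2 * y 1 * y 5)
        + (y 4 + 1 / 2 * y 0 * y 5) * (y 4 + 1 / 2 * y 0 * y 5))
      - 1 / (8 * Real.pi) *
        ((y 0 * y 0 + y 1 * y 1) * (y 0 * y 0 + y 1 * y 1) + 16 * (y 2 * y 2)) ^ (-(1/2) : ℝ))
      = Ham := by
    funext p
    unfold Ham PX PY Qf
    rw [show (p 0 * p 0 + p 1 * p 1) * (p 0 * p 0 + p 1 * p 1) + 16 * (p 2 * p 2)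
      = ((p 0)^2 + (p 1)^2)^2 + 16 * (p 2)^2 by ring]
    ring
  replace hH := hH.congr_of_eventuallyEq (f₁ := Ham) (Filter.Eventually.of_forall fun y => by rw [← hfun]; rfl)
  rw [hH.fderiv]
  simp only [ContinuousLinearMap.coe_sub', ContinuousLinearMap.coe_smul',
    ContinuousLinearMap.add_apply, ContinuousLinearMap.sub_apply,
    ContinuousLinearMap.smul_apply, ContinuousLinearMap.coe_add',
    Pi.sub_apply, Pi.add_apply, Pi.smul_apply, Pi.mul_apply, ContinuousLinearMap.proj_apply,
    smul_eq_mul]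
  have hQe : (q 0 * q 0 + q 1 * q 1) * (q 0 * q 0 + q 1 * q 1) + 16 * (q 2 * q 2) = Qf q := by
    unfold Qf; ring
  rw [hQe]
  unfold PX PY
  have hpi : Real.pi ≠ 0 := Real.pi_ne_zero
  field_simp
  ring

/-- Along any solution of the Kepler–Heisenberg system, the angular momentum
`p_θ = x p_y - y p_x` is conserved. -/
theorem kh_angular_momentum_conserved (c : ℝ → Fin 6 → ℝ) (I : Set ℝ)
    (hc : IsSolutionOn c I) :
    ∀ t₁ ∈ I, ∀ t₂ ∈ I, ptheta (c t₁) = ptheta (c t₂) := by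
  obtain ⟨hIo, hIp, hsol⟩ := hc
  have key : ∀ t ∈ I, HasDerivAt (fun τ => ptheta (c τ)) 0 t := by
    intro t ht
    obtain ⟨hne, hx, hy, _, hpx, hpy, _⟩ := hsol t ht
    have hq : Qf (c t) ≠ 0 := Qf_ne_zero hne
    set q := c t with hqdef
    have e3 : fderiv ℝ Ham q (Pi.single 3 1) = PX q := by
      rw [fderiv_ham_apply q hq]
      simp [Pi.single_apply]
    have e4 : fderiv ℝ Ham q (Pi.single 4 1) = PY q := by
      rw [fderiv_ham_apply q hq]
      simp [Pi.single_apply]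
    have e0 : fderiv ℝ Ham q (Pi.single 0 1) =
        PY q * ((1/2) * q 5)
        + (1/(16*Real.pi)) * (Qf q) ^ (-(1/2) - 1 : ℝ)
          * (2 * ((q 0)^2 + (q 1)^2) * (2 * q 0)) := by
      rw [fderiv_ham_apply q hq]
      simp [Pi.single_apply]
    have e1 : fderiv ℝ Ham q (Pi.single 1 1) =
        PX q * (-(1/2) * q 5)
        + (1/(16*Real.pi)) * (Qf q) ^ (-(1/2) - 1 : ℝ)
          * (2 * ((q 0)^2 + (q 1)^2) * (2 * q 1)) := by
      rw [fderiv_ham_apply q hq]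
      simp [Pi.single_apply]
    rw [e3] at hx
    rw [e4] at hy
    rw [e0] at hpx
    rw [e1] at hpy
    have hder := (hx.mul hpy).sub (hy.mul hpx)
    have hz : PX q * q 4 + q 0 * -(PX q * (-(1/2) * q 5)
        + (1/(16*Real.pi)) * (Qf q) ^ (-(1/2) - 1 : ℝ)
          * (2 * ((q 0)^2 + (q 1)^2) * (2 * q 1)))
        - (PY q * q 3 + q 1 * -(PY q * ((1/2) * q 5)
        + (1/(16*Real.pi)) * (Qf q) ^ (-(1/2) - 1 : ℝ)
          * (2 * ((q 0)^2 + (q 1)^2) * (2 * q 0)))) = 0 := by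
      unfold PX PY; ring
    have hfin : HasDerivAt (fun τ => c τ 0 * c τ 4 - c τ 1 * c τ 3) 0 t := by
      rw [← hz]; exact hder
    exact hfin
  have hconv : Convex ℝ I := convex_iff_ordConnected.mpr hIp.ordConnected
  intro t₁ h₁ t₂ h₂
  have hdiff : DifferentiableOn ℝ (fun τ => ptheta (c τ)) I := fun t ht =>
    ((key t ht).differentiableAt).differentiableWithinAt
  have hzero : ∀ t ∈ I, fderivWithin ℝ (fun τ => ptheta (c τ)) I t = 0 := by
    intro t ht
    rw [fderivWithin_of_isOpen hIo ht]
    have := (key t ht).hasFDerivAt.fderiv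
    rw [this]
    ext v
    simp
  exact hconv.is_const_of_fderivWithin_eq_zero hdiff hzero h₁ h₂
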